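/- arXiv:2403.04597 — 5 statements merged into one kernel-verified Lean document; each statement's English description precedes it below -/
import Mathlib

section
/- If W is a quotient representation of an F1-representation V (the quotient by a subrepresentation U, with underlying pointed sets (V_i \ U_i) ∪ {0}), then Γ_W is a predecessor closed full subquiver of Γ_V: for every arrow a of Γ_V, if t(a) lies in Γ_W then s(a) lies in Γ_W. -/
/-- Let `Q` be a quiver with vertex set `ι`, arrow set `A` and source/target
maps `s, t`, and let `V` be an `F1`-representation of `Q`, encoded by the
families `B i` of nonzero elements of the pointed sets `V_i` together with
structure maps `Vmap a : B (s a) → Option (B (t a))` (`none` standing for the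
zero element), injective away from `none`.

Let `U ⊆ V` be a subrepresentation, encoded by subsets `S i ⊆ B i` with
structure maps `Umap` restricting those of `V`, and let `W = V/U` be the
quotient representation, whose nonzero elements at vertex `i` are `B i \ S i`.

Theorem: the coefficient quiver `Γ_W` is a predecessor closed (full) subquiver
of `Γ_V`: for every arrow `v → w` of `Γ_V` (i.e. `Vmap a v = some w`), if the
target `w` lies in `Γ_W` (i.e. `w ∉ S (t a)`) then the source `v` lies in
`Γ_W` (i.e. `v ∉ S (s a)`). -/
theorem quotient_coeff_quiver_predecessor_closed
    (ι : Type) [Finite ι] (A : Type) [Finite A] (s t : A → ι)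
    (B : ι → Type) [∀ i, Finite (B i)]
    (Vmap : ∀ a : A, B (s a) → Option (B (t a)))
    (Vinj : ∀ (a : A) (v v' : B (s a)) (w : B (t a)),
      Vmap a v = some w → Vmap a v' = some w → v = v')
    -- the subrepresentation `U`
    (S : ∀ i, Set (B i))
    (Umap : ∀ a : A, {v : B (s a) // v ∈ S (s a)} → Option {w : B (t a) // w ∈ S (t a)})
    (Ucompat : ∀ (a : A) (v : B (s a)) (h : v ∈ S (s a)),
      Option.map Subtype.val (Umap a ⟨v, h⟩) = Vmap a v) :
    ∀ (a : A) (v : B (s a)) (w : B (t a)),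
      Vmap a v = some w → w ∉ S (t a) → v ∉ S (s a) := by
  intro a v w hvw hw hv
  have h := Ucompat a v hv
  rw [hvw] at h
  cases hUm : Umap a ⟨v, hv⟩ with
  | none => rw [hUm] at h; simp at h
  | some u =>
      rw [hUm] at h
      simp at h
      exact hw (h ▸ u.2)
end

section
/- Let V and W be F1-representations of a quiver Q, K a field, and let f be a K-linear morphism of representations from V^K to W^K. If (v,w) and (v',w') are vertices of the tensor product coefficient quiver Γ_V ⊗ Γ_W connected by an arrow, then the matrix coefficients of f satisfy f_{v,w} = f_{v',w'}, where f_{v,w} denotes the coefficient of the basis element w in f(v). -/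
open scoped Classical

/-- The structure map of the scalar extension `V^K` along an arrow `a`:
the basis vector `v` is sent to `w` when `Vmap a v = some w`, and to `0` when
`Vmap a v = none`. Here the `F1`-representation is encoded by the families
`B i` of nonzero elements of the `V_i` and by the `Option`-valued structure
maps (`none` standing for zero). -/
noncomputable def structK {ι A : Type} (s t : A → ι) (B : ι → Type)
    [∀ i, Fintype (B i)] (K : Type) [Field K]
    (Vmap : ∀ a : A, B (s a) → Option (B (t a))) (a : A) :
    (B (s a) → K) →ₗ[K] (B (t a) → K) where
  toFun x w := ∑ v : B (s a), (if Vmap a v = some w then (1 : K) else 0) * x v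
  map_add' x y := by
    funext w
    simp [mul_add, Finset.sum_add_distrib]
  map_smul' c x := by
    funext w
    simp [Finset.mul_sum, mul_left_comm]

/-- Matrix coefficients of a morphism of `K`-representations are constant
along arrows of the tensor product coefficient quiver `Γ_V ⊗ Γ_W`:
if there is an arrow `(v,w) → (v',w')`, i.e. an arrow `a` of `Q` with
`V_a v = v' ≠ 0` and `W_a w = w' ≠ 0`, then `f_{v,w} = f_{v',w'}`,
where `f_{v,w}` is the coefficient of `w` in `f v`. -/
theorem coeff_eq_along_tensor_arrow
    (ι : Type) [Fintype ι] (A : Type) [Fintype A] (s t : A → ι)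
    (BV BW : ι → Type) [∀ i, Fintype (BV i)] [∀ i, Fintype (BW i)]
    [∀ i, DecidableEq (BV i)] [∀ i, DecidableEq (BW i)]
    (Vmap : ∀ a : A, BV (s a) → Option (BV (t a)))
    (Wmap : ∀ a : A, BW (s a) → Option (BW (t a)))
    (Vinj : ∀ (a : A) (v v' : BV (s a)) (u : BV (t a)),
      Vmap a v = some u → Vmap a v' = some u → v = v')
    (Winj : ∀ (a : A) (w w' : BW (s a)) (u : BW (t a)),
      Wmap a w = some u → Wmap a w' = some u → w = w')
    (K : Type) [Field K]
    -- a morphism of `K`-representations `f : V^K → W^K`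
    (f : ∀ i, (BV i → K) →ₗ[K] (BW i → K))
    (hf : ∀ a : A, (structK s t BW K Wmap a).comp (f (s a)) =
      (f (t a)).comp (structK s t BV K Vmap a))
    -- an arrow `(v,w) → (v',w')` of `Γ_V ⊗ Γ_W`
    (a : A) (v : BV (s a)) (w : BW (s a)) (v' : BV (t a)) (w' : BW (t a))
    (hv : Vmap a v = some v') (hw : Wmap a w = some w') :
    f (s a) (Pi.single v 1) w = f (t a) (Pi.single v' 1) w' := by
  have h := congrFun (LinearMap.congr_fun (hf a) (Pi.single v 1)) w'
  simp only [LinearMap.comp_apply] at h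
  -- compute LHS of h
  have hL : structK s t BW K Wmap a (f (s a) (Pi.single v 1)) w'
      = f (s a) (Pi.single v 1) w := by
    simp only [structK, LinearMap.coe_mk, AddHom.coe_mk]
    rw [Finset.sum_eq_single w]
    · simp [hw]
    · intro x _ hx
      have : Wmap a x ≠ some w' := fun hc => hx (Winj a x w w' hc hw)
      simp [this]
    · simp
  -- compute the input on the RHS of h
  have hR : structK s t BV K Vmap a (Pi.single v 1) = Pi.single v' (1:K) := by
    funext u
    simp only [structK, LinearMap.coe_mk, AddHom.coe_mk]
    rw [Finset.sum_eq_single v]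
    · rcases eq_or_ne u v' with rfl | hu
      · simp [hv]
      · have : Vmap a v ≠ some u := by simp [hv, hu.symm]
        simp [this, Pi.single_eq_of_ne hu]
    · intro x _ hx
      simp [Pi.single_eq_of_ne hx]
    · simp
  rw [hL, hR] at h
  exact h
end

section
/- Let M be the adjacency matrix of a finite connected k-regular directed graph G with at least two vertices (every vertex has outdegree and indegree k, k ≥ 1). Then the characteristic polynomial of M has a simple root, namely k is an eigenvalue of M of algebraic multiplicity one. -/
open Polynomial Matrix Finset Module

/-- Max principle: a real eigenvector for the eigenvalue `k` of a connected
`k`-regular (in & out) nonnegative matrix is constant. -/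
lemma pf_real_const (ι : Type) [Fintype ι] [DecidableEq ι] [Nonempty ι]
    (M : Matrix ι ι ℕ) (k : ℕ)
    (hout : ∀ u : ι, ∑ v : ι, M u v = k)
    (hin : ∀ v : ι, ∑ u : ι, M u v = k)
    (hconn : ∀ u v : ι,
      Relation.ReflTransGen (fun x y => M x y ≠ 0 ∨ M y x ≠ 0) u v)
    (r : ι → ℝ) (hr : ∀ u, ∑ v, (M u v : ℝ) * r v = k * r u) :
    ∀ u v : ι, r u = r v := by
  classical
  obtain ⟨u0, -, hu0⟩ := Finset.exists_mem_eq_sup' Finset.univ_nonempty r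
  set m := Finset.univ.sup' Finset.univ_nonempty r with hm
  have hle : ∀ w, r w ≤ m := fun w => Finset.le_sup' r (Finset.mem_univ w)
  set S : Finset ι := Finset.univ.filter (fun w => r w = m) with hS
  have hmemS : ∀ w, w ∈ S ↔ r w = m := by intro w; simp [hS]
  -- forward closure
  have hforward : ∀ u ∈ S, ∀ w, M u w ≠ 0 → w ∈ S := by
    intro u hu w hw
    have hru : r u = m := (hmemS u).1 hu
    have hsum : ∑ v, (M u v : ℝ) * r v = ∑ v, (M u v : ℝ) * m := by
      rw [hr u, hru, ← Finset.sum_mul, ← Nat.cast_sum, hout u]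
    have hterm := (Finset.sum_eq_sum_iff_of_le
      (fun v _ => mul_le_mul_of_nonneg_left (hle v) (Nat.cast_nonneg (M u v)))).1 hsum
    have h1 : (M u w : ℝ) * r w = (M u w : ℝ) * m := hterm w (Finset.mem_univ w)
    have h2 : (M u w : ℝ) ≠ 0 := Nat.cast_ne_zero.2 hw
    rw [hmemS]
    exact mul_left_cancel₀ h2 h1
  -- no edges from S to the complement, hence (by counting) none from the complement to S
  have hzero : ∀ u ∈ S, ∀ w ∈ Sᶜ, M u w = 0 := by
    intro u hu w hw
    by_contra h
    exact (Finset.mem_compl.1 hw) (hforward u hu w h)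
  have hrow : ∑ u ∈ S, ∑ w ∈ S, M u w = k * S.card := by
    have hrows : ∀ u ∈ S, ∑ w ∈ S, M u w = k := by
      intro u hu
      have hsplit : ∑ w ∈ S, M u w + ∑ w ∈ Sᶜ, M u w = ∑ w, M u w :=
        Finset.sum_add_sum_compl S _
      have hz : ∑ w ∈ Sᶜ, M u w = 0 :=
        Finset.sum_eq_zero (fun w hw => hzero u hu w hw)
      have ho := hout u
      omega
    rw [Finset.sum_congr rfl hrows, Finset.sum_const, smul_eq_mul, mul_comm]
  have hcol : ∑ w ∈ S, ∑ u ∈ S, M u w + ∑ w ∈ S, ∑ u ∈ Sᶜ, M u w = k * S.card := by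
    have : ∀ w ∈ S, ∑ u ∈ S, M u w + ∑ u ∈ Sᶜ, M u w = k := by
      intro w _
      rw [Finset.sum_add_sum_compl S (fun u => M u w), hin w]
    rw [← Finset.sum_add_distrib, Finset.sum_congr rfl this, Finset.sum_const,
      smul_eq_mul, mul_comm]
  have hrow' : ∑ w ∈ S, ∑ u ∈ S, M u w = k * S.card := by
    rw [Finset.sum_comm]; exact hrow
  have hout0 : ∑ w ∈ S, ∑ u ∈ Sᶜ, M u w = 0 := by omega
  have hbackward : ∀ w ∈ S, ∀ u, M u w ≠ 0 → u ∈ S := by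
    intro w hw u hu
    by_contra h
    have hu' : u ∈ Sᶜ := Finset.mem_compl.2 h
    have : M u w = 0 := by
      have h1 : ∑ u ∈ Sᶜ, M u w = 0 := by
        have := (Finset.sum_eq_zero_iff.1 hout0) w hw
        exact this
      exact (Finset.sum_eq_zero_iff.1 h1) u hu'
    exact hu this
  -- connectivity: everything is in S
  have hall : ∀ v, v ∈ S := by
    intro v
    have h0 : u0 ∈ S := (hmemS u0).2 hu0.symm
    induction hconn u0 v with
    | refl => exact h0
    | tail _ hrel ih =>
      rcases hrel with h | h
      · exact hforward _ ih _ h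
      · exact hbackward _ ih _ h
  intro u v
  rw [(hmemS u).1 (hall u), (hmemS v).1 (hall v)]

lemma pf_complex_const (ι : Type) [Fintype ι] [DecidableEq ι] [Nonempty ι]
    (M : Matrix ι ι ℕ) (k : ℕ)
    (hout : ∀ u : ι, ∑ v : ι, M u v = k)
    (hin : ∀ v : ι, ∑ u : ι, M u v = k)
    (hconn : ∀ u v : ι,
      Relation.ReflTransGen (fun x y => M x y ≠ 0 ∨ M y x ≠ 0) u v)
    (x : ι → ℂ) (hx : ∀ u, ∑ v, (M u v : ℂ) * x v = (k : ℂ) * x u) :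
    ∀ u v : ι, x u = x v := by
  have hre : ∀ u, ∑ v, (M u v : ℝ) * (x v).re = (k : ℝ) * (x u).re := by
    intro u
    have := congrArg Complex.re (hx u)
    simpa [Complex.re_sum, Complex.mul_re] using this
  have him : ∀ u, ∑ v, (M u v : ℝ) * (x v).im = (k : ℝ) * (x u).im := by
    intro u
    have := congrArg Complex.im (hx u)
    simpa [Complex.im_sum, Complex.mul_im] using this
  intro u v
  exact Complex.ext (pf_real_const ι M k hout hin hconn _ hre u v)
    (pf_real_const ι M k hout hin hconn _ him u v)

/-- Perron–Frobenius: let `M` be the adjacency matrix of a finite directed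
graph (with parallel edges allowed, `M u v` counting the edges from `u` to
`v`) with at least two vertices, whose underlying undirected graph is
connected and in which every vertex has outdegree and indegree `k ≥ 1`.
Then `k` is a simple root of the characteristic polynomial of `M` (over `ℂ`):
it is an eigenvalue of algebraic multiplicity one. -/
theorem perron_frobenius_simple_root
    (ι : Type) [Fintype ι] [DecidableEq ι] (hcard : 2 ≤ Fintype.card ι)
    (M : Matrix ι ι ℕ) (k : ℕ) (hk : 1 ≤ k)
    (hout : ∀ u : ι, ∑ v : ι, M u v = k)
    (hin : ∀ v : ι, ∑ u : ι, M u v = k)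
    (hconn : ∀ u v : ι,
      Relation.ReflTransGen (fun x y => M x y ≠ 0 ∨ M y x ≠ 0) u v) :
    (Matrix.charpoly (M.map (Nat.cast : ℕ → ℂ))).rootMultiplicity (k : ℂ) = 1 := by
  classical
  have hne : Nonempty ι := Fintype.card_pos_iff.mp (by omega)
  set A : Matrix ι ι ℂ := M.map (Nat.cast : ℕ → ℂ) with hA
  set B : Matrix ι ι ℂ := A - (k : ℂ) • 1 with hB
  -- Step 1: shifting the characteristic polynomial
  have hshift : (Matrix.charpoly A).comp (X + C (k : ℂ)) = Matrix.charpoly B := by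
    rw [Polynomial.comp_eq_aeval, Matrix.charpoly, Matrix.charpoly, AlgHom.map_det]
    congr 1
    ext i j
    rw [AlgHom.mapMatrix_apply, Matrix.map_apply]
    by_cases h : i = j
    · subst h
      simp [Matrix.charmatrix_apply_eq, hB, Matrix.smul_apply, Matrix.one_apply, map_sub,
        Matrix.sub_apply]
      ring
    · simp [Matrix.charmatrix_apply_ne _ _ _ h, hB, Matrix.sub_apply, Matrix.smul_apply,
        Matrix.one_apply_ne h]
  -- Step 2: root multiplicity as trailing degree
  rw [Polynomial.rootMultiplicity_eq_natTrailingDegree, hshift]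
  -- Step 3: move to the linear endomorphism
  set φ : Module.End ℂ (ι → ℂ) := Matrix.toLin' B with hφ
  have hcp : Matrix.charpoly B = LinearMap.charpoly φ := by
    rw [← LinearMap.charpoly_toMatrix φ (Pi.basisFun ℂ ι), LinearMap.toMatrix_eq_toMatrix',
      hφ, LinearMap.toMatrix'_toLin']
  rw [hcp, ← LinearMap.finrank_maxGenEigenspace_zero_eq]
  -- Step 4: compute the generalized eigenspace
  have hmul : ∀ x : ι → ℂ, φ x = A.mulVec x - (k : ℂ) • x := by
    intro x
    rw [hφ, Matrix.toLin'_apply, hB, Matrix.sub_mulVec, Matrix.smul_mulVec,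
      Matrix.one_mulVec]
  have hAmv : ∀ (x : ι → ℂ) (u : ι), A.mulVec x u = ∑ v, (M u v : ℂ) * x v := by
    intro x u
    simp [Matrix.mulVec, dotProduct, hA, Matrix.map_apply]
  -- kernel is the span of the constant vector
  have hker_const : ∀ x : ι → ℂ, φ x = 0 → ∀ u v, x u = x v := by
    intro x hx
    apply pf_complex_const ι M k hout hin hconn
    intro u
    have := congrFun hx u
    rw [hmul] at this
    have h2 : A.mulVec x u - (k : ℂ) * x u = 0 := by
      simpa [Pi.sub_apply, Pi.smul_apply, smul_eq_mul] using this
    rw [← hAmv x u]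
    linear_combination h2
  have hone : φ (fun _ => (1 : ℂ)) = 0 := by
    funext u
    rw [hmul]
    have : A.mulVec (fun _ => (1 : ℂ)) u = (k : ℂ) := by
      rw [hAmv]
      simp [← Nat.cast_sum, hout u]
    simp [Pi.sub_apply, this]
  have hker : LinearMap.ker φ = Submodule.span ℂ {(fun _ => (1 : ℂ) : ι → ℂ)} := by
    apply le_antisymm
    · intro x hx
      rw [LinearMap.mem_ker] at hx
      obtain ⟨u0⟩ := hne
      have : x = x u0 • (fun _ => (1 : ℂ)) := by
        funext v
        simp [hker_const x hx v u0]
      rw [this]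
      exact Submodule.smul_mem _ _ (Submodule.mem_span_singleton_self _)
    · rw [Submodule.span_singleton_le_iff_mem, LinearMap.mem_ker]
      exact hone
  -- column sums of B vanish, so the image of φ has zero coordinate-sum
  have hsumim : ∀ x : ι → ℂ, ∑ u, φ x u = 0 := by
    intro x
    have : ∀ x : ι → ℂ, ∑ u, φ x u = ∑ v, (∑ u, B u v) * x v := by
      intro x
      simp only [hφ, Matrix.toLin'_apply, Matrix.mulVec, dotProduct]
      rw [Finset.sum_comm]
      simp [Finset.sum_mul]
    rw [this]
    apply Finset.sum_eq_zero
    intro v _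
    have : ∑ u, B u v = 0 := by
      rw [hB]
      simp only [Matrix.sub_apply, Matrix.smul_apply, Matrix.one_apply, Finset.sum_sub_distrib]
      have h1 : ∑ u, A u v = (k : ℂ) := by
        simp [hA, Matrix.map_apply, ← Nat.cast_sum, hin v]
      have h2 : ∑ u : ι, (k : ℂ) • (if u = v then (1 : ℂ) else 0) = (k : ℂ) := by
        simp
      rw [h1, h2, sub_self]
    rw [this, zero_mul]
  -- squares don't enlarge the kernel
  have hsq : ∀ x : ι → ℂ, φ (φ x) = 0 → φ x = 0 := by
    intro x hx
    have : φ x ∈ Submodule.span ℂ {(fun _ => (1 : ℂ) : ι → ℂ)} := by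
      rw [← hker, LinearMap.mem_ker]; exact hx
    obtain ⟨c, hc⟩ := Submodule.mem_span_singleton.1 this
    have hsum := hsumim x
    rw [← hc] at hsum
    have : c * (Fintype.card ι : ℂ) = 0 := by
      simpa [Finset.sum_const, mul_comm] using hsum
    have hcard0 : (Fintype.card ι : ℂ) ≠ 0 := Nat.cast_ne_zero.2 (by omega)
    have hc0 : c = 0 := by
      rcases mul_eq_zero.1 this with h | h
      · exact h
      · exact absurd h hcard0
    rw [← hc, hc0, zero_smul]
  have hpow : ∀ (n : ℕ) (x : ι → ℂ), (φ ^ n) x = 0 → φ x = 0 := by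
    intro n
    induction n with
    | zero =>
      intro x hx
      simp only [pow_zero, Module.End.one_apply] at hx
      rw [hx, map_zero]
    | succ n ih =>
      intro x hx
      rw [pow_succ, Module.End.mul_apply] at hx
      exact hsq x (ih (φ x) hx)
  have hmax : φ.maxGenEigenspace 0 = LinearMap.ker φ := by
    ext x
    rw [Module.End.mem_maxGenEigenspace, LinearMap.mem_ker]
    constructor
    · rintro ⟨n, hn⟩
      simp only [zero_smul, sub_zero] at hn
      exact hpow n x hn
    · intro hx
      exact ⟨1, by simpa using hx⟩
  rw [hmax, hker]
  apply finrank_span_singleton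
  intro h
  obtain ⟨u0⟩ := hne
  have := congrFun h u0
  simp at this
end

section
/- Let V be an indecomposable F1-representation of a quiver Q such that the tensor square coefficient quiver Γ_V ⊗ Γ_V contains a covering component C different from the diagonal component C_id. Then the complexification V^ℂ is a decomposable representation of Q over ℂ. -/
section

/- `Q` is a quiver with vertices `ι`, arrows `A` and source/target maps `s,t`;
`V` is an `F1`-representation of `Q` encoded by the families `B i` of nonzero
elements and the `Option`-valued structure maps `Vmap` (`none` standing for
the zero element), injective away from `none`. -/
variable {ι A : Type} (s t : A → ι) (B : ι → Type)
  (Vmap : ∀ a : A, B (s a) → Option (B (t a)))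

/-- Vertices of the coefficient quiver `Γ_V`. -/
def GVert : Type := Σ i : ι, B i

/-- Undirected adjacency in `Γ_V`. -/
def GAdj (x y : GVert B) : Prop :=
  ∃ (a : A) (v : B (s a)) (w : B (t a)), Vmap a v = some w ∧
    ((x = ⟨s a, v⟩ ∧ y = ⟨t a, w⟩) ∨ (y = ⟨s a, v⟩ ∧ x = ⟨t a, w⟩))

/-- Vertices of the tensor square coefficient quiver `Γ_V ⊗ Γ_V`. -/
def TVert : Type := Σ i : ι, B i × B i

/-- Undirected adjacency in `Γ_V ⊗ Γ_V`: there is an arrow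
`(v,w) → (V_a v, V_a w)` for each arrow `a` of `Q` with both images nonzero. -/
def TAdj (x y : TVert B) : Prop :=
  ∃ (a : A) (v w : B (s a)) (v' w' : B (t a)),
    Vmap a v = some v' ∧ Vmap a w = some w' ∧
    ((x = ⟨s a, (v, w)⟩ ∧ y = ⟨t a, (v', w')⟩) ∨
     (y = ⟨s a, (v, w)⟩ ∧ x = ⟨t a, (v', w')⟩))

/-- `C` is a connected component of `Γ_V ⊗ Γ_V`. -/
def IsComponent (C : Set (TVert B)) : Prop :=
  C.Nonempty ∧
  (∀ x ∈ C, ∀ y, TAdj s t B Vmap x y → y ∈ C) ∧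
  (∀ x ∈ C, ∀ y ∈ C, Relation.ReflTransGen (TAdj s t B Vmap) x y)

/-- The first projection `π₁ : C → Γ_V` is a covering: for every vertex
`(v,w)` of `C` it restricts to a bijection between the arrows of `C` starting
(resp. ending) at `(v,w)` and the arrows of `Γ_V` starting (resp. ending) at
`v`.  Since arrows of `Γ_V ⊗ Γ_V` are determined by one endpoint and their
label, this amounts to the unique existence of lifts. -/
def Proj1Covering (C : Set (TVert B)) : Prop :=
  (∀ (a : A) (v w : B (s a)) (v' : B (t a)),
    (⟨s a, (v, w)⟩ : TVert B) ∈ C → Vmap a v = some v' →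
      ∃! w' : B (t a), Vmap a w = some w') ∧
  (∀ (a : A) (v' w' : B (t a)) (v : B (s a)),
    (⟨t a, (v', w')⟩ : TVert B) ∈ C → Vmap a v = some v' →
      ∃! w : B (s a), Vmap a w = some w')

/-- The second projection `π₂ : C → Γ_V` is a covering. -/
def Proj2Covering (C : Set (TVert B)) : Prop :=
  (∀ (a : A) (v w : B (s a)) (w' : B (t a)),
    (⟨s a, (v, w)⟩ : TVert B) ∈ C → Vmap a w = some w' →
      ∃! v' : B (t a), Vmap a v = some v') ∧
  (∀ (a : A) (v' w' : B (t a)) (w : B (s a)),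
    (⟨t a, (v', w')⟩ : TVert B) ∈ C → Vmap a w = some w' →
      ∃! v : B (s a), Vmap a v = some v')


variable [∀ i, Fintype (B i)]

open scoped Classical in
/-- The structure map of the complexification `V^ℂ` along an arrow `a`. -/
noncomputable def structC (a : A) : (B (s a) → ℂ) →ₗ[ℂ] (B (t a) → ℂ) where
  toFun x w := ∑ v : B (s a), (if Vmap a v = some w then (1 : ℂ) else 0) * x v
  map_add' x y := by funext w; simp [mul_add, Finset.sum_add_distrib]
  map_smul' c x := by funext w; simp [Finset.mul_sum, mul_left_comm]

open scoped Classical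

/-- The endomorphism of `V^ℂ_i` given by the component `C`. -/
noncomputable def bmap (C : Set (TVert B)) (i : ι) : (B i → ℂ) →ₗ[ℂ] (B i → ℂ) where
  toFun x v := ∑ w : B i, (if (⟨i, (v, w)⟩ : TVert B) ∈ C then (1 : ℂ) else 0) * x w
  map_add' x y := by funext v; simp [mul_add, Finset.sum_add_distrib]
  map_smul' c x := by funext v; simp [Finset.mul_sum, mul_left_comm]

/-- Out-degree of `v` in the relation determined by `C`. -/
noncomputable def cdeg (C : Set (TVert B)) {i : ι} (v : B i) : ℕ :=
  (Finset.univ.filter fun w : B i => (⟨i, (v, w)⟩ : TVert B) ∈ C).card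

lemma reach_mem {C : Set (TVert B)} (hC : IsComponent s t B Vmap C) {x y : TVert B}
    (hx : x ∈ C) (h : Relation.ReflTransGen (TAdj s t B Vmap) x y) : y ∈ C := by
  induction h with
  | refl => exact hx
  | tail _ h2 ih => exact hC.2.1 _ ih _ h2

lemma lift1 {C : Set (TVert B)} (hC : IsComponent s t B Vmap C)
    (hcov : Proj1Covering s t B Vmap C) (a : A) (v w : B (s a)) (v' : B (t a))
    (hm : (⟨s a, (v, w)⟩ : TVert B) ∈ C) (hv : Vmap a v = some v') :
    ∃ w', Vmap a w = some w' ∧ (⟨t a, (v', w')⟩ : TVert B) ∈ C := by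
  obtain ⟨w', hw', -⟩ := hcov.1 a v w v' hm hv
  exact ⟨w', hw', hC.2.1 _ hm _ ⟨a, v, w, v', w', hv, hw', Or.inl ⟨rfl, rfl⟩⟩⟩

lemma lift2 {C : Set (TVert B)} (hC : IsComponent s t B Vmap C)
    (hcov : Proj1Covering s t B Vmap C) (a : A) (v' w' : B (t a)) (v : B (s a))
    (hm : (⟨t a, (v', w')⟩ : TVert B) ∈ C) (hv : Vmap a v = some v') :
    ∃ w, Vmap a w = some w' ∧ (⟨s a, (v, w)⟩ : TVert B) ∈ C := by
  obtain ⟨w, hw, -⟩ := hcov.2 a v' w' v hm hv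
  exact ⟨w, hw, hC.2.1 _ hm _ ⟨a, v, w, v', w', hv, hw, Or.inr ⟨rfl, rfl⟩⟩⟩

lemma lift2' {C : Set (TVert B)} (hC : IsComponent s t B Vmap C)
    (hcov : Proj2Covering s t B Vmap C) (a : A) (v' w' : B (t a)) (w : B (s a))
    (hm : (⟨t a, (v', w')⟩ : TVert B) ∈ C) (hw : Vmap a w = some w') :
    ∃ v, Vmap a v = some v' ∧ (⟨s a, (v, w)⟩ : TVert B) ∈ C := by
  obtain ⟨v, hv, -⟩ := hcov.2 a v' w' w hm hw
  exact ⟨v, hv, hC.2.1 _ hm _ ⟨a, v, w, v', w', hv, hw, Or.inr ⟨rfl, rfl⟩⟩⟩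

lemma sum_ite_unique {α : Type} [Fintype α] (P : α → Prop) [DecidablePred P]
    (h : ∀ x y, P x → P y → x = y) :
    (∑ x : α, if P x then (1 : ℂ) else 0) = if ∃ x, P x then 1 else 0 := by
  by_cases hx : ∃ x, P x
  · obtain ⟨x0, hx0⟩ := hx
    rw [if_pos ⟨x0, hx0⟩, Finset.sum_eq_single x0]
    · exact if_pos hx0
    · exact fun b _ hb => if_neg fun hP => hb (h b x0 hP hx0)
    · exact fun h0 => absurd (Finset.mem_univ x0) h0
  · rw [if_neg hx, Finset.sum_eq_zero]
    exact fun x _ => if_neg fun hP => hx ⟨x, hP⟩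

lemma ite_one_mul_ite_one (P Q : Prop) :
    ((if P then (1 : ℂ) else 0) * if Q then (1 : ℂ) else 0) = if P ∧ Q then 1 else 0 := by
  by_cases hP : P <;> by_cases hQ : Q <;> simp [hP, hQ]

/-- `bmap` commutes with the structure maps of `V^ℂ`. -/
lemma bmap_comm {C : Set (TVert B)}
    (Vinj : ∀ (a : A) (v v' : B (s a)) (u : B (t a)),
      Vmap a v = some u → Vmap a v' = some u → v = v')
    (hC : IsComponent s t B Vmap C)
    (hcov1 : Proj1Covering s t B Vmap C) (hcov2 : Proj2Covering s t B Vmap C)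
    (a : A) (x : B (s a) → ℂ) :
    structC s t B Vmap a (bmap B C (s a) x) = bmap B C (t a) (structC s t B Vmap a x) := by
  funext v'
  show (∑ v, (if Vmap a v = some v' then (1 : ℂ) else 0) *
        ∑ w, (if (⟨s a, (v, w)⟩ : TVert B) ∈ C then (1 : ℂ) else 0) * x w)
      = ∑ w', (if (⟨t a, (v', w')⟩ : TVert B) ∈ C then (1 : ℂ) else 0) *
        ∑ w, (if Vmap a w = some w' then (1 : ℂ) else 0) * x w
  have key : ∀ w : B (s a),
      (∑ v, if (Vmap a v = some v' ∧ (⟨s a, (v, w)⟩ : TVert B) ∈ C) then (1 : ℂ) else 0)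
      = ∑ w'', if ((⟨t a, (v', w'')⟩ : TVert B) ∈ C ∧ Vmap a w = some w'')
          then (1 : ℂ) else 0 := by
    intro w
    rw [sum_ite_unique (fun v => Vmap a v = some v' ∧ (⟨s a, (v, w)⟩ : TVert B) ∈ C)
          (fun y z hy hz => Vinj a y z v' hy.1 hz.1),
        sum_ite_unique (fun w'' => (⟨t a, (v', w'')⟩ : TVert B) ∈ C ∧ Vmap a w = some w'')
          (fun y z hy hz => Option.some.inj (hy.2.symm.trans hz.2))]
    congr 1
    refine propext ⟨fun ⟨v, hv, hvw⟩ => ?_, fun ⟨w', hm, hw'⟩ => ?_⟩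
    · obtain ⟨w', hw', hm⟩ := lift1 s t B Vmap hC hcov1 a v w v' hvw hv
      exact ⟨w', hm, hw'⟩
    · obtain ⟨v, hv, hvw⟩ := lift2' s t B Vmap hC hcov2 a v' w' w hm hw'
      exact ⟨v, hv, hvw⟩
  calc (∑ v, (if Vmap a v = some v' then (1 : ℂ) else 0) *
        ∑ w, (if (⟨s a, (v, w)⟩ : TVert B) ∈ C then (1 : ℂ) else 0) * x w)
      = ∑ v, ∑ w, (if (Vmap a v = some v' ∧ (⟨s a, (v, w)⟩ : TVert B) ∈ C)
          then (1 : ℂ) else 0) * x w := by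
        refine Finset.sum_congr rfl fun v _ => ?_
        rw [Finset.mul_sum]
        refine Finset.sum_congr rfl fun w _ => ?_
        rw [← mul_assoc]
        congr 1
        by_cases h1 : Vmap a v = some v' <;>
          by_cases h2 : (⟨s a, (v, w)⟩ : TVert B) ∈ C <;> simp [h1, h2]
    _ = ∑ w, ∑ v, (if (Vmap a v = some v' ∧ (⟨s a, (v, w)⟩ : TVert B) ∈ C)
          then (1 : ℂ) else 0) * x w := Finset.sum_comm
    _ = ∑ w, (∑ v, if (Vmap a v = some v' ∧ (⟨s a, (v, w)⟩ : TVert B) ∈ C)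
          then (1 : ℂ) else 0) * x w :=
        Finset.sum_congr rfl fun w _ => (Finset.sum_mul _ _ _).symm
    _ = ∑ w, (∑ w'', if ((⟨t a, (v', w'')⟩ : TVert B) ∈ C ∧ Vmap a w = some w'')
          then (1 : ℂ) else 0) * x w :=
        Finset.sum_congr rfl fun w _ => by rw [key w]
    _ = ∑ w, ∑ w'', (if ((⟨t a, (v', w'')⟩ : TVert B) ∈ C ∧ Vmap a w = some w'')
          then (1 : ℂ) else 0) * x w :=
        Finset.sum_congr rfl fun w _ => Finset.sum_mul _ _ _
    _ = ∑ w'', ∑ w, (if ((⟨t a, (v', w'')⟩ : TVert B) ∈ C ∧ Vmap a w = some w'')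
          then (1 : ℂ) else 0) * x w := Finset.sum_comm
    _ = ∑ w'', (if (⟨t a, (v', w'')⟩ : TVert B) ∈ C then (1 : ℂ) else 0) *
        ∑ w, (if Vmap a w = some w'' then (1 : ℂ) else 0) * x w := by
        refine Finset.sum_congr rfl fun w'' _ => ?_
        rw [Finset.mul_sum]
        refine Finset.sum_congr rfl fun w _ => ?_
        rw [← mul_assoc]
        congr 1
        by_cases h1 : (⟨t a, (v', w'')⟩ : TVert B) ∈ C <;>
          by_cases h2 : Vmap a w = some w'' <;> simp [h1, h2]

lemma cdeg_edge {C : Set (TVert B)}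
    (Vinj : ∀ (a : A) (v v' : B (s a)) (u : B (t a)),
      Vmap a v = some u → Vmap a v' = some u → v = v')
    (hC : IsComponent s t B Vmap C)
    (hcov1 : Proj1Covering s t B Vmap C)
    (a : A) (v : B (s a)) (v' : B (t a)) (hv : Vmap a v = some v') :
    cdeg B C v = cdeg B C v' := by
  unfold cdeg
  refine Finset.card_bij (fun w _ => (Vmap a w).getD v')
    (fun w hw => ?_) (fun w₁ hw₁ w₂ hw₂ heq => ?_) (fun w' hw' => ?_)
  · obtain ⟨w'', hw'', hm⟩ :=
      lift1 s t B Vmap hC hcov1 a v w v' (Finset.mem_filter.mp hw).2 hv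
    show (Vmap a w).getD v' ∈ _
    have : (Vmap a w).getD v' = w'' := by rw [hw'']; rfl
    rw [this]
    exact Finset.mem_filter.mpr ⟨Finset.mem_univ _, hm⟩
  · obtain ⟨w₁', hw₁', -⟩ :=
      lift1 s t B Vmap hC hcov1 a v w₁ v' (Finset.mem_filter.mp hw₁).2 hv
    obtain ⟨w₂', hw₂', -⟩ :=
      lift1 s t B Vmap hC hcov1 a v w₂ v' (Finset.mem_filter.mp hw₂).2 hv
    have heq' : (Vmap a w₁).getD v' = (Vmap a w₂).getD v' := heq
    rw [hw₁', hw₂'] at heq'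
    simp only [Option.getD_some] at heq'
    exact Vinj a w₁ w₂ w₁' hw₁' (heq' ▸ hw₂')
  · obtain ⟨w, hw, hm⟩ :=
      lift2 s t B Vmap hC hcov1 a v' w' v (Finset.mem_filter.mp hw').2 hv
    refine ⟨w, Finset.mem_filter.mpr ⟨Finset.mem_univ _, hm⟩, ?_⟩
    show (Vmap a w).getD v' = w'
    rw [hw]; rfl

lemma cdeg_reach {C : Set (TVert B)}
    (Vinj : ∀ (a : A) (v v' : B (s a)) (u : B (t a)),
      Vmap a v = some u → Vmap a v' = some u → v = v')
    (hC : IsComponent s t B Vmap C)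
    (hcov1 : Proj1Covering s t B Vmap C)
    {x y : GVert B} (h : Relation.ReflTransGen (GAdj s t B Vmap) x y) :
    cdeg B C x.2 = cdeg B C y.2 := by
  induction h with
  | refl => rfl
  | tail _ h2 ih =>
    rw [ih]
    obtain ⟨a, v, w, hvw, hor⟩ := h2
    rcases hor with ⟨h1, h2⟩ | ⟨h1, h2⟩
    · rw [h1, h2]; exact cdeg_edge s t B Vmap Vinj hC hcov1 a v w hvw
    · rw [h1, h2]; exact (cdeg_edge s t B Vmap Vinj hC hcov1 a v w hvw).symm

lemma diag_reach {x y : GVert B} (h : Relation.ReflTransGen (GAdj s t B Vmap) x y) :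
    Relation.ReflTransGen (TAdj s t B Vmap)
      (⟨x.1, (x.2, x.2)⟩ : TVert B) (⟨y.1, (y.2, y.2)⟩ : TVert B) := by
  induction h with
  | refl => exact Relation.ReflTransGen.refl
  | tail _ h2 ih =>
    refine Relation.ReflTransGen.tail ih ?_
    obtain ⟨a, v, w, hvw, hor⟩ := h2
    rcases hor with ⟨h1, h2⟩ | ⟨h1, h2⟩
    · rw [h1, h2]; exact ⟨a, v, v, w, w, hvw, hvw, Or.inl ⟨rfl, rfl⟩⟩
    · rw [h1, h2]; exact ⟨a, v, v, w, w, hvw, hvw, Or.inr ⟨rfl, rfl⟩⟩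

/-- A linear map intertwining two endomorphisms maps generalized eigenspaces to
generalized eigenspaces. -/
lemma maps_maxGenEigenspace {M N : Type} [AddCommGroup M] [Module ℂ M]
    [AddCommGroup N] [Module ℂ N] (f : M →ₗ[ℂ] N) (b : Module.End ℂ M)
    (b' : Module.End ℂ N) (h : ∀ x, f (b x) = b' (f x)) (μ : ℂ) (x : M)
    (hx : x ∈ b.maxGenEigenspace μ) : f x ∈ b'.maxGenEigenspace μ := by
  rw [Module.End.mem_maxGenEigenspace] at hx ⊢
  obtain ⟨k, hk⟩ := hx
  refine ⟨k, ?_⟩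
  have key : ∀ (k : ℕ) (y : M), f (((b - μ • 1) ^ k) y) = ((b' - μ • 1) ^ k) (f y) := by
    intro k
    induction k with
    | zero => intro y; simp
    | succ n ih =>
      intro y
      rw [pow_succ, Module.End.mul_apply, pow_succ, Module.End.mul_apply, ih]
      congr 1
      simp only [LinearMap.sub_apply, LinearMap.smul_apply, Module.End.one_apply,
        map_sub, map_smul, h]
  rw [← key, hk, map_zero]


lemma bmap_trace (C : Set (TVert B)) (i : ι) :
    LinearMap.trace ℂ (B i → ℂ) (bmap B C i)
      = ((Finset.univ.filter fun v : B i => (⟨i, (v, v)⟩ : TVert B) ∈ C).card : ℂ) := by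
  rw [LinearMap.trace_eq_matrix_trace ℂ (Pi.basisFun ℂ (B i)), Matrix.trace]
  have hdiag : ∀ v : B i,
      (LinearMap.toMatrix (Pi.basisFun ℂ (B i)) (Pi.basisFun ℂ (B i)) (bmap B C i)).diag v
        = if (⟨i, (v, v)⟩ : TVert B) ∈ C then (1 : ℂ) else 0 := by
    intro v
    rw [Matrix.diag, LinearMap.toMatrix_apply, Pi.basisFun_repr, Pi.basisFun_apply]
    show (∑ w, (if (⟨i, (v, w)⟩ : TVert B) ∈ C then (1 : ℂ) else 0) *
        (Pi.single v (1 : ℂ) : B i → ℂ) w) = _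
    rw [Finset.sum_eq_single v]
    · rw [Pi.single_eq_same, mul_one]
    · intro b _ hb
      rw [Pi.single_eq_of_ne hb, mul_zero]
    · intro h0
      exact absurd (Finset.mem_univ v) h0
  rw [Finset.sum_congr rfl fun v _ => hdiag v, Finset.sum_boole]

/-- Let `V` be an indecomposable `F1`-representation of `Q` (so `Γ_V` is
connected and nonempty). If `Γ_V ⊗ Γ_V` contains a covering component `C`
different from the diagonal component `C_id = {(v,v)}`, then the
complexification `V^ℂ` is decomposable: there are two families of subspaces,
both invariant under all structure maps, not both zero, forming complements
at every vertex. -/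
theorem complexification_decomposable_of_extra_covering_component
    (Vinj : ∀ (a : A) (v v' : B (s a)) (u : B (t a)),
      Vmap a v = some u → Vmap a v' = some u → v = v')
    [Nonempty (GVert B)]
    (hconn : ∀ x y : GVert B, Relation.ReflTransGen (GAdj s t B Vmap) x y)
    (C : Set (TVert B)) (hC : IsComponent s t B Vmap C)
    (hcov : Proj1Covering s t B Vmap C ∧ Proj2Covering s t B Vmap C)
    (hne : C ≠ {x : TVert B | x.2.1 = x.2.2}) :
    ∃ U₁ U₂ : ∀ i : ι, Submodule ℂ (B i → ℂ),
      (∀ (a : A) (x : B (s a) → ℂ), x ∈ U₁ (s a) → structC s t B Vmap a x ∈ U₁ (t a)) ∧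
      (∀ (a : A) (x : B (s a) → ℂ), x ∈ U₂ (s a) → structC s t B Vmap a x ∈ U₂ (t a)) ∧
      (∃ i, U₁ i ≠ ⊥) ∧ (∃ i, U₂ i ≠ ⊥) ∧
      (∀ i, IsCompl (U₁ i) (U₂ i)) := by
  classical
  obtain ⟨hcov1, hcov2⟩ := hcov
  -- `C` contains a non-diagonal vertex
  have hnd : ∃ x ∈ C, x.2.1 ≠ x.2.2 := by
    by_contra hcon
    push_neg at hcon
    apply hne
    refine Set.Subset.antisymm (fun x hx => hcon x hx) (fun x hx => ?_)
    obtain ⟨x0, hx0⟩ := hC.1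
    obtain ⟨j, u, u'⟩ := x0
    have hd0 : u = u' := hcon _ hx0
    subst hd0
    obtain ⟨k, z, z'⟩ := x
    have hzz : z = z' := hx
    subst hzz
    exact reach_mem s t B Vmap hC hx0
      (diag_reach s t B Vmap (hconn ⟨j, u⟩ ⟨k, z⟩))
  obtain ⟨x1, hx1, hne1⟩ := hnd
  obtain ⟨i₀, v₀, w₀⟩ := x1
  have hne0 : v₀ ≠ w₀ := hne1
  set d : ℕ := cdeg B C v₀ with hd
  have hdeg : ∀ (i : ι) (v : B i), cdeg B C v = d :=
    fun i v => (cdeg_reach s t B Vmap Vinj hC hcov1 (hconn ⟨i₀, v₀⟩ ⟨i, v⟩)).symm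
  have hd1 : 1 ≤ d :=
    Finset.card_pos.mpr ⟨w₀, Finset.mem_filter.mpr ⟨Finset.mem_univ _, hx1⟩⟩
  -- the two invariant families of subspaces
  have hinv : ∀ (μ : ℂ) (a : A) (x : B (s a) → ℂ),
      x ∈ Module.End.maxGenEigenspace (bmap B C (s a)) μ →
        structC s t B Vmap a x ∈ Module.End.maxGenEigenspace (bmap B C (t a)) μ :=
    fun μ a x hx => maps_maxGenEigenspace (structC s t B Vmap a) (bmap B C (s a))
      (bmap B C (t a)) (fun y => bmap_comm s t B Vmap Vinj hC hcov1 hcov2 a y) μ x hx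
  have hcompl : ∀ i, IsCompl (Module.End.maxGenEigenspace (bmap B C i) (d : ℂ))
      (⨆ (μ : ℂ) (_ : μ ≠ (d : ℂ)), Module.End.maxGenEigenspace (bmap B C i) μ) := by
    intro i
    constructor
    · exact Module.End.independent_maxGenEigenspace (bmap B C i) (d : ℂ)
    · rw [codisjoint_iff, eq_top_iff,
        ← Module.End.iSup_maxGenEigenspace_eq_top (bmap B C i)]
      refine iSup_le fun μ => ?_
      by_cases hμ : μ = (d : ℂ)
      · rw [hμ]; exact le_sup_left
      · exact le_trans
          (le_iSup₂ (f := fun (μ : ℂ) (_ : μ ≠ (d : ℂ)) => Module.End.maxGenEigenspace (bmap B C i) μ)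
            μ hμ) le_sup_right
  refine ⟨fun i => Module.End.maxGenEigenspace (bmap B C i) (d : ℂ),
    fun i => ⨆ (μ : ℂ) (_ : μ ≠ (d : ℂ)), Module.End.maxGenEigenspace (bmap B C i) μ,
    fun a x hx => hinv (d : ℂ) a x hx, ?_, ⟨i₀, ?_⟩, ⟨i₀, ?_⟩, hcompl⟩
  · -- invariance of the second family
    intro a x hx
    have hle : (⨆ (μ : ℂ) (_ : μ ≠ (d : ℂ)), Module.End.maxGenEigenspace (bmap B C (s a)) μ) ≤
        Submodule.comap (structC s t B Vmap a)
          (⨆ (μ : ℂ) (_ : μ ≠ (d : ℂ)), Module.End.maxGenEigenspace (bmap B C (t a)) μ) := by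
      refine iSup₂_le fun μ hμ y hy => ?_
      exact Submodule.mem_comap.mpr
        (Submodule.mem_iSup_of_mem μ (Submodule.mem_iSup_of_mem hμ (hinv μ a y hy)))
    exact hle hx
  · -- the first family is nonzero at `i₀`
    have hone : (fun _ => (1 : ℂ)) ∈ Module.End.maxGenEigenspace (bmap B C i₀) (d : ℂ) := by
      rw [Module.End.mem_maxGenEigenspace]
      refine ⟨1, ?_⟩
      rw [pow_one]
      simp only [LinearMap.sub_apply, LinearMap.smul_apply, Module.End.one_apply]
      have hb : bmap B C i₀ (fun _ => (1 : ℂ)) = fun _ => (d : ℂ) := by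
        funext v
        show (∑ w, (if (⟨i₀, (v, w)⟩ : TVert B) ∈ C then (1 : ℂ) else 0) * 1) = (d : ℂ)
        simp only [mul_one]
        rw [Finset.sum_boole]
        exact_mod_cast congrArg (Nat.cast : ℕ → ℂ) (hdeg i₀ v)
      rw [hb]
      funext v
      simp
    rw [Submodule.ne_bot_iff]
    refine ⟨fun _ => (1 : ℂ), hone, fun h0 => ?_⟩
    have := congrFun h0 v₀
    simp at this
  · -- the second family is nonzero at `i₀`
    intro hbot
    have htop : Module.End.maxGenEigenspace (bmap B C i₀) (d : ℂ) = ⊤ := by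
      have hbot' : (⨆ (μ : ℂ) (_ : μ ≠ (d : ℂ)),
          Module.End.maxGenEigenspace (bmap B C i₀) μ) = ⊥ := hbot
      have h2 := (hcompl i₀).codisjoint
      rwa [codisjoint_iff, hbot', sup_bot_eq] at h2
    have hnil : IsNilpotent (bmap B C i₀ - (d : ℂ) • 1) := by
      refine ⟨Module.finrank ℂ (B i₀ → ℂ), ?_⟩
      apply LinearMap.ext
      intro y
      have hy : y ∈ Module.End.maxGenEigenspace (bmap B C i₀) (d : ℂ) := htop ▸ Submodule.mem_top
      rw [Module.End.maxGenEigenspace_eq_genEigenspace_finrank] at hy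
      rw [LinearMap.zero_apply]
      exact Module.End.mem_genEigenspace_nat.mp hy
    have htr0 : LinearMap.trace ℂ (B i₀ → ℂ) (bmap B C i₀ - (d : ℂ) • 1) = 0 :=
      (LinearMap.isNilpotent_trace_of_isNilpotent hnil).eq_zero
    rw [map_sub, map_smul, LinearMap.trace_one, bmap_trace, sub_eq_zero,
      Module.finrank_fintype_fun_eq_card, smul_eq_mul] at htr0
    -- deduce the natural-number equation
    have hcard : (Finset.univ.filter fun v : B i₀ =>
        (⟨i₀, (v, v)⟩ : TVert B) ∈ C).card = d * Fintype.card (B i₀) := by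
      have : ((Finset.univ.filter fun v : B i₀ =>
          (⟨i₀, (v, v)⟩ : TVert B) ∈ C).card : ℂ) = ((d * Fintype.card (B i₀) : ℕ) : ℂ) := by
        rw [htr0]; push_cast; ring
      exact_mod_cast this
    have hle : (Finset.univ.filter fun v : B i₀ =>
        (⟨i₀, (v, v)⟩ : TVert B) ∈ C).card ≤ Fintype.card (B i₀) :=
      (Finset.card_filter_le _ _).trans_eq (Finset.card_univ)
    have hBpos : 0 < Fintype.card (B i₀) := Fintype.card_pos_iff.mpr ⟨v₀⟩
    have hd_eq : d = 1 := by
      have hle2 : d * Fintype.card (B i₀) ≤ 1 * Fintype.card (B i₀) := by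
        rw [one_mul, ← hcard]; exact hle
      exact le_antisymm (Nat.le_of_mul_le_mul_right hle2 hBpos) hd1
    have huniv : (Finset.univ.filter fun v : B i₀ =>
        (⟨i₀, (v, v)⟩ : TVert B) ∈ C) = Finset.univ := by
      apply Finset.eq_univ_of_card
      rw [hcard, hd_eq, one_mul]
    have hvv : (⟨i₀, (v₀, v₀)⟩ : TVert B) ∈ C := by
      have := huniv ▸ Finset.mem_univ v₀
      exact (Finset.mem_filter.mp this).2
    have h2le : 1 < cdeg B C v₀ := by
      apply Finset.one_lt_card.mpr
      exact ⟨v₀, Finset.mem_filter.mpr ⟨Finset.mem_univ _, hvv⟩,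
        w₀, Finset.mem_filter.mpr ⟨Finset.mem_univ _, hx1⟩, hne0⟩
    rw [← hd, hd_eq] at h2le
    exact lt_irrefl 1 h2le

end
end

section
/- Let V be an F1-representation of a quiver Q. Suppose there exists a string E in the coefficient quiver Γ_V with s(E) ≠ t(E), and a string D from t(E) to s(E) such that the image of D under the winding c_V equals the s-fold composition c_V(E)^s of the image of E for some s ≥ 1. Then V does not have finite nice length: no finite nice sequence of gradings of V distinguishes all vertices of Γ_V. -/
section

/- `Q` is a quiver with vertices `ι`, arrows `A` and source/target maps `s,t`;
`V` is an `F1`-representation of `Q`, encoded by the families `B i` of nonzero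
elements and the `Option`-valued structure maps `Vmap` (`none` standing for
the zero element), injective away from `none`. -/
variable {ι A : Type} (s t : A → ι) (B : ι → Type)
  (Vmap : ∀ a : A, B (s a) → Option (B (t a)))

/-- Arrows of the coefficient quiver `Γ_V`: an arrow `v → w` labelled `a`
whenever `V_a v = w ≠ 0`. -/
def GArr : Type :=
  Σ a : A, {p : B (s a) × B (t a) // Vmap a p.1 = some p.2}

/-- Source of an arrow of `Γ_V`. -/
def gsrc (e : GArr s t B Vmap) : GVert B := ⟨s e.1, e.2.1.1⟩

/-- Target of an arrow of `Γ_V`. -/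
def gtgt (e : GArr s t B Vmap) : GVert B := ⟨t e.1, e.2.1.2⟩

/-- A letter of a string: an arrow `a` (direct letter, `true`) or its formal
inverse `a⁻` (`false`). -/
def Letter : Type := GArr s t B Vmap × Bool

/-- Source of a letter: `s(a) = s a` for a direct letter, `s(a⁻) = t a`. -/
def lsrc (x : Letter s t B Vmap) : GVert B :=
  if x.2 then gsrc s t B Vmap x.1 else gtgt s t B Vmap x.1

/-- Target of a letter: `t(a) = t a` for a direct letter, `t(a⁻) = s a`. -/
def ltgt (x : Letter s t B Vmap) : GVert B :=
  if x.2 then gtgt s t B Vmap x.1 else gsrc s t B Vmap x.1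

/-- The image of a letter under the winding `c_V`: the label of the arrow in
`Q` together with the direction. -/
def clabel (x : Letter s t B Vmap) : A × Bool := (x.1.1, x.2)

lemma flatten_replicate_getElem? {α : Type} (l : List α) :
    ∀ (σ i : ℕ), i < σ * l.length →
      ((List.replicate σ l).flatten)[i]? = l[i % l.length]? := by
  intro σ
  induction σ with
  | zero => intro i hi; simp at hi
  | succ σ ih =>
    intro i hi
    rw [List.replicate_succ, List.flatten_cons]
    by_cases h : i < l.length
    · rw [List.getElem?_append_left h, Nat.mod_eq_of_lt h]
    · push_neg at h
      have hb : i - l.length < σ * l.length := by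
        have : (σ + 1) * l.length = σ * l.length + l.length := Nat.succ_mul _ _
        omega
      rw [List.getElem?_append_right h, ih (i - l.length) hb]
      congr 1
      exact (Nat.mod_eq_sub_mod h).symm

/-- If there is a string `E` in `Γ_V` that is not a cycle but can be completed
to a cycle by a string `D` with `c_V(D) = c_V(E)^σ` for some `σ ≥ 1`, then `V`
does not have finite nice length: no finite nice sequence of gradings of `V`
distinguishes all vertices of `Γ_V`.  Strings are encoded as nonempty lists of
letters, written left to right (`a_1 ⋯ a_n`, so `s(E)` is the source of the
head and `t(E)` the target of the last letter). -/
theorem not_finite_nice_length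
    (Vinj : ∀ (a : A) (v v' : B (s a)) (u : B (t a)),
      Vmap a v = some u → Vmap a v' = some u → v = v')
    (E D : List (Letter s t B Vmap))
    (hEne : E ≠ []) (hDne : D ≠ [])
    (hEstr : List.Chain' (fun x y => ltgt s t B Vmap x = lsrc s t B Vmap y) E)
    (hDstr : List.Chain' (fun x y => ltgt s t B Vmap x = lsrc s t B Vmap y) D)
    -- `E` is not a cycle
    (hnc : lsrc s t B Vmap (E.head hEne) ≠ ltgt s t B Vmap (E.getLast hEne))
    -- `D` completes `E` to a cycle: `D` goes from `t(E)` to `s(E)`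
    (hDs : lsrc s t B Vmap (D.head hDne) = ltgt s t B Vmap (E.getLast hEne))
    (hDt : ltgt s t B Vmap (D.getLast hDne) = lsrc s t B Vmap (E.head hEne))
    -- `c_V(D) = c_V(E)^σ` with `σ ≥ 1`
    (σ : ℕ) (hσ : 1 ≤ σ)
    (himg : D.map (clabel s t B Vmap) =
      (List.replicate σ (E.map (clabel s t B Vmap))).flatten) :
    ¬ ∃ (n : ℕ) (grad : Fin (n + 1) → GVert B → ℤ),
      -- the sequence of gradings is nice
      (∀ k : Fin (n + 1), ∀ a b : GArr s t B Vmap, a.1 = b.1 →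
        (∀ j : Fin (n + 1), j < k →
          grad j (gsrc s t B Vmap a) = grad j (gsrc s t B Vmap b) ∧
          grad j (gtgt s t B Vmap a) = grad j (gtgt s t B Vmap b)) →
        grad k (gsrc s t B Vmap a) - grad k (gtgt s t B Vmap a) =
          grad k (gsrc s t B Vmap b) - grad k (gtgt s t B Vmap b)) ∧
      -- and it distinguishes the vertices of `Γ_V`
      (∀ x y : GVert B, x ≠ y → ∃ k : Fin (n + 1), grad k x ≠ grad k y) := by
  rintro ⟨n, grad, hnice, hsep⟩
  have hm : 0 < E.length := List.length_pos_iff.mpr hEne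
  have hD0 : 0 < D.length := List.length_pos_iff.mpr hDne
  -- the sequence of vertices along `E`
  obtain ⟨v, hvsrc, hvtop⟩ :
      ∃ v : ℕ → GVert B,
        (∀ i (h : i < E.length), v i = lsrc s t B Vmap (E[i]'h)) ∧
        v E.length = ltgt s t B Vmap (E.getLast hEne) :=
    ⟨fun i => if h : i < E.length then lsrc s t B Vmap (E[i]'h)
      else ltgt s t B Vmap (E.getLast hEne),
      fun i h => dif_pos h, dif_neg (lt_irrefl _)⟩
  -- the sequence of vertices along `D`
  obtain ⟨w, hwsrc, hwtop⟩ :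
      ∃ w : ℕ → GVert B,
        (∀ i (h : i < D.length), w i = lsrc s t B Vmap (D[i]'h)) ∧
        w D.length = ltgt s t B Vmap (D.getLast hDne) :=
    ⟨fun i => if h : i < D.length then lsrc s t B Vmap (D[i]'h)
      else ltgt s t B Vmap (D.getLast hDne),
      fun i h => dif_pos h, dif_neg (lt_irrefl _)⟩
  have hvtgt : ∀ i (h : i < E.length), ltgt s t B Vmap (E[i]'h) = v (i + 1) := by
    intro i h
    rcases Nat.lt_or_ge (i + 1) E.length with h1 | h1
    · rw [hvsrc (i + 1) h1]
      have := List.isChain_iff_getElem.mp hEstr i (by omega)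
      simpa [List.get_eq_getElem] using this
    · have h2 : i + 1 = E.length := by omega
      have h3 : E.getLast hEne = E[i]'h := by
        rw [List.getLast_eq_getElem]
        simp only [show E.length - 1 = i from by omega]
      rw [h2, hvtop, h3]
  have hwtgt : ∀ i (h : i < D.length), ltgt s t B Vmap (D[i]'h) = w (i + 1) := by
    intro i h
    rcases Nat.lt_or_ge (i + 1) D.length with h1 | h1
    · rw [hwsrc (i + 1) h1]
      have := List.isChain_iff_getElem.mp hDstr i (by omega)
      simpa [List.get_eq_getElem] using this
    · have h2 : i + 1 = D.length := by omega
      have h3 : D.getLast hDne = D[i]'h := by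
        rw [List.getLast_eq_getElem]
        simp only [show D.length - 1 = i from by omega]
      rw [h2, hwtop, h3]
  have hv0 : v 0 = lsrc s t B Vmap (E.head hEne) := by
    rw [hvsrc 0 hm, List.head_eq_getElem_zero]
  have hw0 : w 0 = v E.length := by
    rw [hwsrc 0 hD0, ← List.head_eq_getElem_zero hDne, hDs, hvtop]
  have hwN : w D.length = v 0 := by
    rw [hwtop, hDt, hv0]
  -- lengths
  have hND : D.length = σ * E.length := by
    have := congrArg List.length himg
    simpa [List.length_flatten, List.map_replicate, List.sum_replicate] using this
  -- labels
  have hlab : ∀ i (h : i < D.length),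
      clabel s t B Vmap (D[i]'h)
        = clabel s t B Vmap (E[i % E.length]'(Nat.mod_lt _ hm)) := by
    intro i h
    have h1 := congrArg (fun l => l[i]?) himg
    rw [flatten_replicate_getElem? (E.map (clabel s t B Vmap)) σ i
      (by rw [List.length_map, ← hND]; exact h)] at h1
    simp only [List.length_map] at h1
    rw [List.getElem?_map, List.getElem?_map,
      List.getElem?_eq_getElem h,
      List.getElem?_eq_getElem (Nat.mod_lt _ hm)] at h1
    simpa using h1
  -- niceness in terms of letters
  have hdiffL : ∀ (k : Fin (n + 1)) (x y : Letter s t B Vmap),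
      clabel s t B Vmap x = clabel s t B Vmap y →
      (∀ j : Fin (n + 1), j < k →
        grad j (lsrc s t B Vmap x) = grad j (lsrc s t B Vmap y) ∧
        grad j (ltgt s t B Vmap x) = grad j (ltgt s t B Vmap y)) →
      grad k (lsrc s t B Vmap x) - grad k (ltgt s t B Vmap x)
        = grad k (lsrc s t B Vmap y) - grad k (ltgt s t B Vmap y) := by
    rintro k ⟨e, b⟩ ⟨e', b'⟩ hcl h
    obtain ⟨h1, h2⟩ : e.1 = e'.1 ∧ b = b' := by
      simpa [clabel, Prod.ext_iff] using hcl
    subst h2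
    have key : grad k (gsrc s t B Vmap e) - grad k (gtgt s t B Vmap e) =
        grad k (gsrc s t B Vmap e') - grad k (gtgt s t B Vmap e') := by
      refine hnice k e e' h1 (fun j hj => ?_)
      have hh := h j hj
      cases b <;> simp [lsrc, ltgt] at hh <;> tauto
    cases b <;> simp [lsrc, ltgt] <;> linarith
  -- the main induction
  have key : ∀ k, ∀ hk : k < n + 1,
      grad ⟨k, hk⟩ (v 0) = grad ⟨k, hk⟩ (v E.length) ∧
      ∀ i ≤ D.length, grad ⟨k, hk⟩ (w i) = grad ⟨k, hk⟩ (v (i % E.length)) := by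
    intro k
    induction k using Nat.strong_induction_on with
    | _ k IH =>
    intro hk
    set K : Fin (n + 1) := ⟨k, hk⟩ with hK
    have hIH : ∀ j : Fin (n + 1), j < K →
        grad j (v 0) = grad j (v E.length) ∧
        ∀ i ≤ D.length, grad j (w i) = grad j (v (i % E.length)) :=
      fun j hj => IH j.1 hj j.2
    have hdiff : ∀ i (hi : i < D.length),
        grad K (w i) - grad K (w (i + 1)) =
        grad K (v (i % E.length)) - grad K (v (i % E.length + 1)) := by
      intro i hi
      have him : i % E.length < E.length := Nat.mod_lt _ hm
      have e1 : w i = lsrc s t B Vmap (D[i]'hi) := hwsrc i hi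
      have e2 : w (i + 1) = ltgt s t B Vmap (D[i]'hi) := (hwtgt i hi).symm
      have e3 : v (i % E.length) = lsrc s t B Vmap (E[i % E.length]'him) :=
        hvsrc _ him
      have e4 : v (i % E.length + 1) = ltgt s t B Vmap (E[i % E.length]'him) :=
        (hvtgt _ him).symm
      rw [e1, e2, e3, e4]
      refine hdiffL K _ _ (hlab i hi) (fun j hj => ?_)
      obtain ⟨hj1, hj2⟩ := hIH j hj
      rw [← e1, ← e2, ← e3, ← e4]
      refine ⟨hj2 i (le_of_lt hi), ?_⟩
      have hw1 := hj2 (i + 1) hi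
      by_cases hc : i % E.length + 1 < E.length
      · have hmod : (i + 1) % E.length = i % E.length + 1 := by
          conv_lhs => rw [← Nat.div_add_mod i E.length]
          rw [Nat.add_assoc, Nat.mul_add_mod, Nat.mod_eq_of_lt hc]
        rw [hmod] at hw1
        exact hw1
      · have hc2 : i % E.length + 1 = E.length := by omega
        have hmod : (i + 1) % E.length = 0 := by
          conv_lhs => rw [← Nat.div_add_mod i E.length]
          rw [Nat.add_assoc, Nat.mul_add_mod, hc2, Nat.mod_self]
        rw [hmod] at hw1
        rw [hc2]
        exact hw1.trans hj1
    -- the key telescoping identity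
    have hC : ∀ i, i ≤ D.length →
        grad K (w i) = grad K (v (i % E.length)) + grad K (v E.length)
          - grad K (v 0)
          - (i / E.length : ℕ) * (grad K (v 0) - grad K (v E.length)) := by
      intro i
      induction i with
      | zero =>
        intro _
        simp only [Nat.zero_mod, Nat.zero_div, Nat.cast_zero, zero_mul, sub_zero]
        rw [hw0]; ring
      | succ i ih =>
        intro hi1
        have hi : i < D.length := hi1
        have him : i % E.length < E.length := Nat.mod_lt _ hm
        have hih := ih (le_of_lt hi)
        have hd := hdiff i hi
        by_cases hc : i % E.length + 1 < E.length
        · have hmod : (i + 1) % E.length = i % E.length + 1 := by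
            conv_lhs => rw [← Nat.div_add_mod i E.length]
            rw [Nat.add_assoc, Nat.mul_add_mod, Nat.mod_eq_of_lt hc]
          have hdiv : (i + 1) / E.length = i / E.length := by
            conv_lhs => rw [← Nat.div_add_mod i E.length]
            rw [Nat.add_assoc, Nat.mul_add_div hm, Nat.div_eq_of_lt hc,
              Nat.add_zero]
          rw [hmod, hdiv]
          linarith
        · have hc2 : i % E.length + 1 = E.length := by omega
          have hmod : (i + 1) % E.length = 0 := by
            conv_lhs => rw [← Nat.div_add_mod i E.length]
            rw [Nat.add_assoc, Nat.mul_add_mod, hc2, Nat.mod_self]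
          have hdiv : (i + 1) / E.length = i / E.length + 1 := by
            conv_lhs => rw [← Nat.div_add_mod i E.length]
            rw [Nat.add_assoc, Nat.mul_add_div hm, hc2, Nat.div_self hm]
          rw [hmod, hdiv]
          rw [hc2] at hd
          rw [Nat.cast_add, Nat.cast_one]
          linarith
    have hNm : D.length % E.length = 0 := by rw [hND, Nat.mul_mod_left]
    have hNdiv : D.length / E.length = σ := by
      rw [hND]; exact Nat.mul_div_cancel σ hm
    have hEnd := hC D.length le_rfl
    rw [hwN, hNm, hNdiv] at hEnd
    have hδ : grad K (v 0) = grad K (v E.length) := by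
      have h1 : ((σ : ℤ) + 1) * (grad K (v 0) - grad K (v E.length)) = 0 := by
        linarith
      have h2 : (σ : ℤ) + 1 ≠ 0 := by positivity
      rcases mul_eq_zero.mp h1 with h | h
      · exact absurd h h2
      · linarith
    refine ⟨hδ, fun i hi => ?_⟩
    rw [hC i hi, hδ]
    ring
  -- conclusion
  have hne : v 0 ≠ v E.length := by
    rw [hv0, hvtop]; exact hnc
  obtain ⟨k, hk2⟩ := hsep (v 0) (v E.length) hne
  exact hk2 ((key k.1 k.2).1)

end
end
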